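/- arXiv:2107.06404 — 2 statements merged into one kernel-verified Lean document; each statement's English description precedes it below -/
import Mathlib

section
/- (Discrete Riemann–Lebesgue lemma, first order) Let λ : [0,1] → ℝ be positive, f : [0,1] → ℂ continuously differentiable, L ≥ 1, T > 0, δt := T/L, and suppose δt·λ(s) < 3.78 for all s. Write f_k = f(s_k), g_k = (1/L)∑_{j<k} λ(s_j), ω(s) = (e^{-i δt λ(s)} - 1)/(i δt). Then |(1/L) ∑_{k=1}^{L} f_k e^{-iT g_k}| ≤ (1/T)( |f(s_L)/ω(s_L)| + |f(s_0)/ω(s_0)| + ∑_{k=1}^L |f(s_k)/ω(s_k) - f(s_{k-1})/ω(s_{k-1})| ). -/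
open Complex

lemma abel_aux_stmt8 (a b : ℕ → ℂ) (n : ℕ) :
    ∑ k ∈ Finset.Icc 1 n, a k * (b (k+1) - b k)
      = a n * b (n+1) - a 0 * b 1 - ∑ k ∈ Finset.Icc 1 n, (a k - a (k-1)) * b k := by
  induction n with
  | zero => simp
  | succ n ih =>
    rw [Finset.sum_Icc_succ_top (by omega), Finset.sum_Icc_succ_top (by omega), ih]
    simp only [Nat.add_sub_cancel]
    ring


/-- (Discrete Riemann–Lebesgue lemma, first order) Let `lam : [0,1] → ℝ` be positive,
`f : [0,1] → ℂ` continuously differentiable, `L ≥ 1`, `T > 0`, `δt := T/L`, and suppose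
`δt·lam(s) < 3.78` on `[0,1]`. With sample points `s_k = k/L`, `f_k = f(s_k)`,
`g_k = (1/L)∑_{j<k} lam(s_j)` and `ω(s) = (e^{-i δt lam(s)} - 1)/(i δt)`, we have
`|(1/L) ∑_{k=1}^{L} f_k e^{-iT g_k}|
  ≤ (1/T)(|f(s_L)/ω(s_L)| + |f(s_0)/ω(s_0)|
      + ∑_{k=1}^L |f(s_k)/ω(s_k) - f(s_{k-1})/ω(s_{k-1})|)`. -/
theorem stmt8 (L : ℕ) (hL : 1 ≤ L) (T : ℝ) (hT : 0 < T) (f : ℝ → ℂ) (lam : ℝ → ℝ)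
    (hf : ContDiffOn ℝ 1 f (Set.Icc (0:ℝ) 1))
    (hlam : ∀ s ∈ Set.Icc (0:ℝ) 1, 0 < lam s ∧ (T / L) * lam s < 3.78)
    (s : ℕ → ℝ) (hs : ∀ k, s k = (k : ℝ) / L)
    (g : ℕ → ℝ) (hg : ∀ k, g k = (1 / (L : ℝ)) * ∑ j ∈ Finset.range k, lam (s j))
    (ω : ℝ → ℂ)
    (hω : ∀ x, ω x = (Complex.exp (-(Complex.I * (T / L) * lam x)) - 1) /
      (Complex.I * (T / L))) :
    ‖(1 / (L : ℂ)) * ∑ k ∈ Finset.Icc 1 L,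
        f (s k) * Complex.exp (-(Complex.I * T * g k))‖ ≤
      (1 / T) * (‖f (s L) / ω (s L)‖ + ‖f (s 0) / ω (s 0)‖ +
        ∑ k ∈ Finset.Icc 1 L,
          ‖f (s k) / ω (s k) - f (s (k - 1)) / ω (s (k - 1))‖) := by
  have hLR : (0:ℝ) < L := by exact_mod_cast hL
  have hLC : (L:ℂ) ≠ 0 := Nat.cast_ne_zero.mpr (by omega)
  have hTC : (T:ℂ) ≠ 0 := Complex.ofReal_ne_zero.mpr hT.ne'
  have hδ0 : (Complex.I * ((T:ℂ) / (L:ℂ))) ≠ 0 :=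
    mul_ne_zero Complex.I_ne_zero (div_ne_zero hTC hLC)
  -- ω is nonvanishing on [0,1]
  have hωne : ∀ x ∈ Set.Icc (0:ℝ) 1, ω x ≠ 0 := by
    intro x hx
    obtain ⟨hl1, hl2⟩ := hlam x hx
    rw [hω]
    refine div_ne_zero ?_ hδ0
    intro hzero
    have hexp1 : Complex.exp (-(Complex.I * (T / L) * lam x)) = 1 := sub_eq_zero.mp hzero
    rw [Complex.exp_eq_one_iff] at hexp1
    obtain ⟨n, hn⟩ := hexp1
    have him := congrArg Complex.im hn
    simp [Complex.mul_im, Complex.mul_re] at him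
    have hπ : (3:ℝ) < Real.pi := Real.pi_gt_three
    have hc : 0 < T / L * lam x := by positivity
    rcases lt_trichotomy n 0 with h1 | h1 | h1
    · have h1' : (n:ℝ) ≤ -1 := by exact_mod_cast (by omega : n ≤ -1)
      nlinarith
    · subst h1; push_cast at him; nlinarith
    · have h1' : (1:ℝ) ≤ (n:ℝ) := by exact_mod_cast h1
      nlinarith
  have hsmem : ∀ k, k ≤ L → s k ∈ Set.Icc (0:ℝ) 1 := by
    intro k hk
    rw [hs]
    constructor
    · positivity
    · rw [div_le_one hLR]; exact_mod_cast hk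
  set E : ℕ → ℂ := fun k => Complex.exp (-(Complex.I * T * g k)) with hE
  set h : ℕ → ℂ := fun k => f (s k) / ω (s k) with hh
  -- the key telescoping identity
  have key : ∀ k ∈ Finset.Icc 1 L,
      f (s k) * E k * (Complex.I * ((T:ℂ) / (L:ℂ))) = h k * (E (k+1) - E k) := by
    intro k hk
    rw [Finset.mem_Icc] at hk
    have hωk := hωne (s k) (hsmem k hk.2)
    have hEstep : E (k+1) = E k * Complex.exp (-(Complex.I * (T / L) * lam (s k))) := by
      have hgk : g (k+1) = g k + lam (s k) / L := by
        rw [hg, hg, Finset.sum_range_succ]; field_simp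
      simp only [hE]
      rw [← Complex.exp_add, hgk]
      push_cast
      ring_nf
    have hωmul : (ω (s k)) * (Complex.I * ((T:ℂ) / (L:ℂ)))
        = Complex.exp (-(Complex.I * (T / L) * lam (s k))) - 1 := by
      rw [hω]; field_simp
    have hfh : h k * ω (s k) = f (s k) := by
      rw [hh]; field_simp
    calc f (s k) * E k * (Complex.I * ((T:ℂ) / (L:ℂ)))
        = h k * (ω (s k) * (Complex.I * ((T:ℂ) / (L:ℂ)))) * E k := by
          rw [← hfh]; ring
      _ = h k * (E (k+1) - E k) := by rw [hωmul, hEstep]; ring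
  -- norm of E is 1
  have hEabs : ∀ k, ‖E k‖ = 1 := by
    intro k
    simp [hE, Complex.norm_exp]
  -- summation by parts
  have hsum : (∑ k ∈ Finset.Icc 1 L, f (s k) * E k) * (Complex.I * ((T:ℂ) / (L:ℂ)))
      = h L * E (L+1) - h 0 * E 1 - ∑ k ∈ Finset.Icc 1 L, (h k - h (k-1)) * E k := by
    rw [Finset.sum_mul, Finset.sum_congr rfl key, abel_aux_stmt8]
  -- bound
  have habs : ‖∑ k ∈ Finset.Icc 1 L, f (s k) * E k‖ * (T / L)
      ≤ ‖h L‖ + ‖h 0‖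
        + ∑ k ∈ Finset.Icc 1 L, ‖h k - h (k-1)‖ := by
    have h1 : ‖Complex.I * ((T:ℂ) / (L:ℂ))‖ = T / L := by
      simp [abs_of_pos hT]
    calc ‖∑ k ∈ Finset.Icc 1 L, f (s k) * E k‖ * (T / L)
        = ‖(∑ k ∈ Finset.Icc 1 L, f (s k) * E k) * (Complex.I * ((T:ℂ) / (L:ℂ)))‖ := by
          rw [norm_mul, h1]
      _ = ‖h L * E (L+1) - h 0 * E 1 - ∑ k ∈ Finset.Icc 1 L, (h k - h (k-1)) * E k‖ := by
          rw [hsum]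
      _ ≤ ‖h L * E (L+1)‖ + ‖h 0 * E 1‖
            + ‖∑ k ∈ Finset.Icc 1 L, (h k - h (k-1)) * E k‖ := by
          refine le_trans (norm_sub_le _ _) ?_
          gcongr
          exact norm_sub_le _ _
      _ ≤ ‖h L‖ + ‖h 0‖
            + ∑ k ∈ Finset.Icc 1 L, ‖h k - h (k-1)‖ := by
          gcongr
          · rw [norm_mul, hEabs, mul_one]
          · rw [norm_mul, hEabs, mul_one]
          · refine le_trans (norm_sum_le _ _) (le_of_eq ?_)
            refine Finset.sum_congr rfl fun k hk => ?_
            rw [norm_mul, hEabs, mul_one]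
  rw [norm_mul]
  have h2 : ‖1/(L:ℂ)‖ = 1/(L:ℝ) := by simp
  rw [h2]
  have h3 : (1:ℝ)/L * ‖∑ k ∈ Finset.Icc 1 L, f (s k) * E k‖
      = (1/T) * (‖∑ k ∈ Finset.Icc 1 L, f (s k) * E k‖ * (T/L)) := by
    field_simp
  rw [h3]
  gcongr
end

section
/- With notation as above (shifted Hamiltonian H with HP = 0, G its pseudo-inverse with GH = HG = I - P, GP = PG = 0), the derivative of G satisfies G' = P H' G² - G H' G + G² H' P. -/
open Matrix

lemma mulDerivAux {n : ℕ} (A B : ℝ → Matrix (Fin n) (Fin n) ℂ)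
    (A' B' : Matrix (Fin n) (Fin n) ℂ) (s₀ : ℝ)
    (hA : ∀ i j, HasDerivAt (fun s => A s i j) (A' i j) s₀)
    (hB : ∀ i j, HasDerivAt (fun s => B s i j) (B' i j) s₀) :
    ∀ i j, HasDerivAt (fun s => (A s * B s) i j)
      ((A' * B s₀ + A s₀ * B') i j) s₀ := by
  intro i j
  simp only [Matrix.mul_apply, Matrix.add_apply]
  rw [← Finset.sum_add_distrib]
  exact HasDerivAt.fun_sum fun k _ => (hA i k).mul (hB k j)

/-- With the shifted Hamiltonian `H` (`HP = 0`), spectral projector `P` and pseudo-inverse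
`G` (`GH = HG = I - P`, `GP = PG = 0`, `P' = -G H' P - P H' G`), the derivative of `G`
satisfies `G' = P H' G² - G H' G + G² H' P`. -/
theorem stmt12 (n : ℕ) (H P G : ℝ → Matrix (Fin n) (Fin n) ℂ)
    (H' P' G' : Matrix (Fin n) (Fin n) ℂ) (s₀ : ℝ)
    (hHerm : ∀ s, (H s).IsHermitian) (hPHerm : ∀ s, (P s).IsHermitian)
    (hGHerm : ∀ s, (G s).IsHermitian)
    (hProj : ∀ s, P s * P s = P s)
    (hHP : ∀ s, H s * P s = 0)
    (hGH : ∀ s, G s * H s = 1 - P s) (hHG : ∀ s, H s * G s = 1 - P s)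
    (hGP : ∀ s, G s * P s = 0) (hPG : ∀ s, P s * G s = 0)
    (hHd : ∀ i j, HasDerivAt (fun s => H s i j) (H' i j) s₀)
    (hPd : ∀ i j, HasDerivAt (fun s => P s i j) (P' i j) s₀)
    (hGd : ∀ i j, HasDerivAt (fun s => G s i j) (G' i j) s₀)
    (hP' : P' = -(G s₀ * H' * P s₀) - P s₀ * H' * G s₀) :
    G' = P s₀ * H' * (G s₀ * G s₀) - G s₀ * H' * G s₀ + (G s₀ * G s₀) * H' * P s₀ := by
  -- derivative of G*H
  have d1 := mulDerivAux G H G' H' s₀ hGd hHd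
  have d1' : ∀ i j, HasDerivAt (fun s => (G s * H s) i j) ((-P') i j) s₀ := by
    intro i j
    have : (fun s => (G s * H s) i j) = fun s => (1 : Matrix (Fin n) (Fin n) ℂ) i j - P s i j := by
      funext s; rw [hGH s]; simp [Matrix.sub_apply]
    rw [this]
    simpa using (hasDerivAt_const s₀ _).fun_sub (hPd i j)
  have e1 : G' * H s₀ + G s₀ * H' = -P' := by
    ext i j; exact (d1 i j).unique (d1' i j)
  -- derivative of G*P
  have d2 := mulDerivAux G P G' P' s₀ hGd hPd
  have d2' : ∀ i j, HasDerivAt (fun s => (G s * P s) i j) ((0 : Matrix (Fin n) (Fin n) ℂ) i j) s₀ := by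
    intro i j
    have : (fun s => (G s * P s) i j) = fun _ => (0 : ℂ) := by
      funext s; rw [hGP s]; simp
    rw [this]; simpa using hasDerivAt_const s₀ (0 : ℂ)
  have e2 : G' * P s₀ + G s₀ * P' = 0 := by
    ext i j; exact (d2 i j).unique (d2' i j)
  have eGH : G' * H s₀ = -P' - G s₀ * H' := by
    rw [← e1]; noncomm_ring
  have eGP : G' * P s₀ = -(G s₀ * P') := by
    rw [← sub_eq_zero] at e2 ⊢
    calc G' * P s₀ - -(G s₀ * P') = G' * P s₀ + G s₀ * P' - 0 := by noncomm_ring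
    _ = 0 := by rw [e2]
  have key : G' = G' * H s₀ * G s₀ + G' * P s₀ := by
    rw [mul_assoc, hHG s₀, mul_sub, mul_one]; noncomm_ring
  rw [key, eGH, eGP, hP']
  simp only [sub_mul, neg_mul, mul_sub, mul_neg, neg_neg, neg_sub, sub_neg_eq_add]
  have a1 : (P s₀ * H' * G s₀ + G s₀ * H' * P s₀) * G s₀ = P s₀ * H' * (G s₀ * G s₀) := by
    rw [add_mul,
      show G s₀ * H' * P s₀ * G s₀ = G s₀ * H' * (P s₀ * G s₀) from by noncomm_ring,
      hPG s₀, mul_zero, add_zero]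
    noncomm_ring
  have a2 : G s₀ * (P s₀ * H' * G s₀) + G s₀ * (G s₀ * H' * P s₀) = G s₀ * G s₀ * H' * P s₀ := by
    rw [show G s₀ * (P s₀ * H' * G s₀) = G s₀ * P s₀ * (H' * G s₀) from by noncomm_ring,
      hGP s₀, zero_mul, zero_add]
    noncomm_ring
  rw [a1, a2]
end
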